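/- arXiv:0908.0165 — 2 statements merged into one kernel-verified Lean document; each statement's English description precedes it below -/
import Mathlib

section
/- Let (V(ℚ), C, Γ) be such that Γ ≤ GL(V) preserves C and some lattice L in V(ℚ), and suppose there exists a polyhedral cone Π ⊆ C_+ with Γ·Π ⊇ C. Then Γ has only finitely many orbits on the set of extreme points of [C ∩ L], for every Γ-invariant lattice L ⊆ V(ℚ). -/
/-- A polyhedral cone: a cone defined by finitely many linear inequalities. -/
def IsPolyhedralCone {V : Type*} [AddCommGroup V] [Module ℝ V] (P : Set V) : Prop :=
  ∃ s : Finset (V →ₗ[ℝ] ℝ), P = {x : V | ∀ ξ ∈ s, 0 ≤ ξ x}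

open Finset


private theorem mw_gen {V : Type*} [AddCommGroup V] [Module ℝ V] [FiniteDimensional ℝ V]
    (s : Finset (V →ₗ[ℝ] ℝ)) :
    ∃ (ι : Type) (_ : Fintype ι) (v : ι → V),
      (∀ i, ∀ ξ ∈ s, 0 ≤ ξ (v i)) ∧
      ∀ x : V, (∀ ξ ∈ s, 0 ≤ ξ x) →
        ∃ t : ι → ℝ, (∀ i, 0 ≤ t i) ∧ x = ∑ i, t i • v i := by
  classical
  induction s using Finset.induction_on with
  | empty =>
    let b := Module.finBasis ℝ V
    refine ⟨Fin (Module.finrank ℝ V) ⊕ Fin (Module.finrank ℝ V), inferInstance,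
      Sum.elim (fun i => b i) (fun i => -(b i)), by simp, ?_⟩
    intro x _
    refine ⟨Sum.elim (fun i => max (b.repr x i) 0) (fun i => max (-(b.repr x i)) 0), ?_, ?_⟩
    · rintro (i | i) <;> simp
    · rw [Fintype.sum_sum_type]
      simp only [Sum.elim_inl, Sum.elim_inr]
      rw [← Finset.sum_add_distrib]
      have h : ∀ i, max (b.repr x i) 0 • b i + max (-(b.repr x i)) 0 • (-(b i))
          = (b.repr x i) • b i := by
        intro i
        rw [smul_neg, ← sub_eq_add_neg, ← sub_smul, max_zero_sub_max_neg_zero_eq_self]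
      rw [Finset.sum_congr rfl fun i _ => h i, b.sum_repr]
  | @insert η s hηs IH =>
    obtain ⟨ι, hι, v, hv, hx⟩ := IH
    refine ⟨ι ⊕ ι × ι, inferInstance, ?_⟩
    set w : ι ⊕ ι × ι → V := Sum.elim
      (fun i => if 0 ≤ η (v i) then v i else 0)
      (fun pr => if 0 < η (v pr.1) ∧ η (v pr.2) < 0 then
        (η (v pr.1)) • v pr.2 - (η (v pr.2)) • v pr.1 else 0) with hw
    refine ⟨w, ?_, ?_⟩
    · rintro (i | ⟨i, j⟩) ξ hξ <;> rcases Finset.mem_insert.mp hξ with rfl | hξs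
      · simp only [hw, Sum.elim_inl]
        split_ifs with h
        · exact h
        · simp
      · simp only [hw, Sum.elim_inl]
        split_ifs with h
        · exact hv i ξ hξs
        · simp
      · simp only [hw, Sum.elim_inr]
        split_ifs with h
        · have : ξ ((ξ (v i)) • v j - (ξ (v j)) • v i) = 0 := by
            simp only [map_sub, map_smul, smul_eq_mul]; ring
          rw [this]
        · simp
      · simp only [hw, Sum.elim_inr]
        split_ifs with h
        · have h1 := hv i ξ hξs
          have h2 := hv j ξ hξs
          simp only [map_sub, map_smul, smul_eq_mul]
          nlinarith [h.1, h.2]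
        · simp
    · intro x hxmem
      have hxs : ∀ ξ ∈ s, 0 ≤ ξ x := fun ξ h => hxmem ξ (Finset.mem_insert_of_mem h)
      have hηx : 0 ≤ η x := hxmem η (Finset.mem_insert_self _ _)
      obtain ⟨t, ht0, htx⟩ := hx x hxs
      set p : ι → ℝ := fun i => if 0 < η (v i) then t i * η (v i) else 0 with hp
      set q : ι → ℝ := fun j => if η (v j) < 0 then t j else 0 with hq
      set r : ι → ℝ := fun i => if 0 < η (v i) then t i else 0 with hr
      set sg : ι → ℝ := fun j => if η (v j) < 0 then t j * η (v j) else 0 with hsg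
      set α := ∑ i, p i with hα
      have hp0 : ∀ i, 0 ≤ p i := by
        intro i; simp only [hp]; split_ifs with h
        · exact mul_nonneg (ht0 i) h.le
        · exact le_refl 0
      have hα0 : 0 ≤ α := Finset.sum_nonneg fun i _ => hp0 i
      have hsg0 : ∀ j, sg j ≤ 0 := by
        intro j; simp only [hsg]; split_ifs with h
        · exact mul_nonpos_of_nonneg_of_nonpos (ht0 j) h.le
        · exact le_refl 0
      have hηx_eq : η x = α + ∑ j, sg j := by
        rw [htx, map_sum, hα, ← Finset.sum_add_distrib]
        refine Finset.sum_congr rfl fun i _ => ?_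
        simp only [map_smul, smul_eq_mul, hp, hsg]
        by_cases h1 : 0 < η (v i)
        · rw [if_pos h1, if_neg (asymm h1)]; ring
        · by_cases h2 : η (v i) < 0
          · rw [if_neg h1, if_pos h2]; ring
          · have h3 : η (v i) = 0 := le_antisymm (not_lt.mp h1) (not_lt.mp h2)
            rw [if_neg h1, if_neg h2, h3]; ring
      by_cases hαz : α = 0
      · have hsum0 : ∑ j, sg j = 0 := by
          have h1 : ∑ j, sg j ≤ 0 := Finset.sum_nonpos fun j _ => hsg0 j
          have h2 : (0:ℝ) ≤ α + ∑ j, sg j := hηx_eq ▸ hηx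
          rw [hαz] at h2; linarith
        have hneg0 : ∀ i, η (v i) < 0 → t i = 0 := by
          intro i hi
          have hz := (Finset.sum_eq_zero_iff_of_nonpos (fun j _ => hsg0 j)).mp hsum0 i
            (Finset.mem_univ i)
          simp only [hsg, if_pos hi] at hz
          rcases mul_eq_zero.mp hz with h | h
          · exact h
          · exact absurd h hi.ne
        refine ⟨Sum.elim (fun i => if 0 ≤ η (v i) then t i else 0) (fun _ => 0), ?_, ?_⟩
        · rintro (i | pr)
          · simp only [Sum.elim_inl]; split_ifs
            · exact ht0 i
            · exact le_refl 0
          · simp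
        · rw [Fintype.sum_sum_type]
          simp only [Sum.elim_inl, Sum.elim_inr, zero_smul, Finset.sum_const_zero, add_zero]
          rw [htx]
          refine Finset.sum_congr rfl fun i _ => ?_
          simp only [hw, Sum.elim_inl]
          by_cases h : 0 ≤ η (v i)
          · rw [if_pos h, if_pos h]
          · rw [if_neg h, if_neg h, hneg0 i (not_le.mp h), zero_smul, zero_smul]
      · have hαpos : 0 < α := lt_of_le_of_ne hα0 (Ne.symm hαz)
        set β : ℝ := -∑ j, sg j with hβ
        have hβ0 : 0 ≤ β := by
          have : ∑ j, sg j ≤ 0 := Finset.sum_nonpos fun j _ => hsg0 j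
          simp only [hβ]; linarith
        have hβα : β ≤ α := by
          have h2 : (0:ℝ) ≤ α + ∑ j, sg j := hηx_eq ▸ hηx
          simp only [hβ]; linarith
        have hba1 : β / α ≤ 1 := (div_le_one hαpos).mpr hβα
        refine ⟨Sum.elim (fun i => (if 0 ≤ η (v i) then t i else 0) - r i * (β / α))
          (fun pr : ι × ι => r pr.1 * q pr.2 / α), ?_, ?_⟩
        · rintro (i | ⟨i, j⟩)
          · simp only [Sum.elim_inl, hr]
            by_cases h1 : 0 < η (v i)
            · rw [if_pos h1.le, if_pos h1]
              nlinarith [ht0 i]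
            · by_cases h2 : 0 ≤ η (v i)
              · rw [if_pos h2, if_neg h1]
                simpa using ht0 i
              · rw [if_neg h2, if_neg h1]
                simp
          · simp only [Sum.elim_inr]
            apply div_nonneg _ hα0
            apply mul_nonneg
            · simp only [hr]; split_ifs
              · exact ht0 _
              · exact le_refl 0
            · simp only [hq]; split_ifs
              · exact ht0 _
              · exact le_refl 0
        · rw [Fintype.sum_sum_type]
          have h_inl : ∑ i, (Sum.elim (fun i => (if 0 ≤ η (v i) then t i else 0) - r i * (β / α))
              (fun pr : ι × ι => r pr.1 * q pr.2 / α) (Sum.inl i)) • w (Sum.inl i)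
              = (∑ i, (if 0 ≤ η (v i) then t i else 0) • v i)
                - ∑ i, (r i * (β / α)) • v i := by
            rw [← Finset.sum_sub_distrib]
            refine Finset.sum_congr rfl fun i _ => ?_
            simp only [Sum.elim_inl, hw, hr]
            by_cases h1 : 0 < η (v i)
            · rw [if_pos h1.le, if_pos h1.le, if_pos h1, sub_smul]
            · by_cases h2 : 0 ≤ η (v i)
              · simp [if_pos h2, if_neg h1]
              · simp [if_neg h2, if_neg h1]
          have h_inr : ∑ pr : ι × ι, (Sum.elim
              (fun i => (if 0 ≤ η (v i) then t i else 0) - r i * (β / α))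
              (fun pr : ι × ι => r pr.1 * q pr.2 / α) (Sum.inr pr)) • w (Sum.inr pr)
              = (∑ j, q j • v j) + ∑ i, (r i * (β / α)) • v i := by
            have hpt : ∀ i j, (r i * q j / α) • w (Sum.inr (i, j))
                = p i • (α⁻¹ • (q j • v j)) - (sg j / α) • (r i • v i) := by
              intro i j
              simp only [hw, Sum.elim_inr, hp, hq, hr, hsg]
              by_cases h1 : 0 < η (v i)
              · by_cases h2 : η (v j) < 0
                · simp only [if_pos h1, if_pos h2, if_pos (And.intro h1 h2)]
                  rw [smul_sub]
                  match_scalars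
                  all_goals field_simp
                  all_goals try ring
                  all_goals tauto
                · simp [h1, h2]
              · simp [h1]
            rw [Fintype.sum_prod_type]
            simp only [Sum.elim_inr]
            rw [Finset.sum_congr rfl fun i _ => Finset.sum_congr rfl fun j _ => hpt i j]
            rw [Finset.sum_congr rfl fun i _ => Finset.sum_sub_distrib _ _]
            rw [Finset.sum_sub_distrib]
            have e1 : ∑ i, ∑ j, p i • (α⁻¹ • (q j • v j)) = ∑ j, q j • v j := by
              have : ∀ i, ∑ j, p i • (α⁻¹ • (q j • v j))
                  = p i • (α⁻¹ • ∑ j, q j • v j) := by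
                intro i; rw [← Finset.smul_sum, ← Finset.smul_sum]
              rw [Finset.sum_congr rfl fun i _ => this i, ← Finset.sum_smul, ← hα,
                smul_smul, mul_inv_cancel₀ hαz, one_smul]
            have e2 : ∑ i, ∑ j, (sg j / α) • (r i • v i)
                = ∑ i, (-(β / α)) • (r i • v i) := by
              refine Finset.sum_congr rfl fun i _ => ?_
              rw [← Finset.sum_smul]
              congr 1
              rw [← Finset.sum_div]
              simp only [hβ]
              field_simp
            rw [e1, e2]
            have e3 : ∀ i, (-(β / α)) • (r i • v i) = -((r i * (β / α)) • v i) := by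
              intro i
              rw [smul_smul, ← neg_smul]; ring_nf
            rw [Finset.sum_congr rfl fun i _ => e3 i, Finset.sum_neg_distrib, sub_neg_eq_add]
          rw [h_inl, h_inr, htx]
          have : (∑ i, (if 0 ≤ η (v i) then t i else 0) • v i) - (∑ i, (r i * (β / α)) • v i)
              + ((∑ j, q j • v j) + ∑ i, (r i * (β / α)) • v i)
              = (∑ i, (if 0 ≤ η (v i) then t i else 0) • v i) + (∑ j, q j • v j) := by
            abel
          rw [this, ← Finset.sum_add_distrib]
          refine Finset.sum_congr rfl fun i _ => ?_
          simp only [hq]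
          by_cases h : 0 ≤ η (v i)
          · rw [if_pos h, if_neg (not_lt.mpr h), zero_smul, add_zero]
          · rw [if_neg h, if_pos (not_le.mp h), zero_smul, zero_add]


private theorem lattice_ball_finite {V : Type*} [NormedAddCommGroup V] [NormedSpace ℝ V]
    [FiniteDimensional ℝ V] (L : AddSubgroup V) (hL : DiscreteTopology L) (R : ℝ) :
    {x : V | x ∈ L ∧ ‖x‖ ≤ R}.Finite := by
  have hclosed : IsClosed (L : Set V) := AddSubgroup.isClosed_of_discrete
  have heq : {x : V | x ∈ L ∧ ‖x‖ ≤ R} = (L : Set V) ∩ Metric.closedBall 0 R := by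
    ext x; simp [Metric.mem_closedBall, dist_eq_norm]
  have hcl2 : IsClosed {x : V | x ∈ L ∧ ‖x‖ ≤ R} := by
    rw [heq]; exact hclosed.inter Metric.isClosed_closedBall
  have hcomp : IsCompact {x : V | x ∈ L ∧ ‖x‖ ≤ R} := by
    refine (isCompact_closedBall (0:V) R).of_isClosed_subset hcl2 ?_
    intro x hx; simpa [dist_eq_norm] using hx.2
  refine hcomp.finite ?_
  exact ⟨DiscreteTopology.of_subset (s := (L : Set V)) hL (fun x hx => hx.1)⟩

private theorem exists_nsmul_mem_lattice {V : Type*} [NormedAddCommGroup V] [NormedSpace ℝ V]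
    [FiniteDimensional ℝ V] (L₀ : AddSubgroup V) (hL₀disc : DiscreteTopology L₀)
    (Q : Set V) (hQ : Q = {v : V | ∃ (q : ℚ) (l : V), l ∈ L₀ ∧ v = (q : ℝ) • l})
    (L : AddSubgroup V) (hLspan : Submodule.span ℝ (L : Set V) = ⊤)
    (hLQ : (L : Set V) ⊆ Q) (q : V) (hq : q ∈ Q) :
    ∃ N : ℕ, 0 < N ∧ (N : ℝ) • q ∈ L := by
  classical
  -- denominator clearing into L₀
  have hden : ∀ v ∈ Q, ∃ m : ℕ, 0 < m ∧ (m : ℝ) • v ∈ L₀ := by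
    intro v hv
    rw [hQ] at hv
    obtain ⟨r, l, hl, rfl⟩ := hv
    refine ⟨r.den, r.pos, ?_⟩
    have h2 : (r.den : ℝ) * (r : ℝ) = (r.num : ℝ) := by
      have := congrArg (fun a : ℚ => (a : ℝ)) (Rat.mul_den_eq_num r)
      push_cast at this ⊢
      linarith [this]
    rw [smul_smul, h2, Int.cast_smul_eq_zsmul ℝ r.num l]
    exact zsmul_mem hl r.num
  -- a finite subset of L spanning q
  have hqspan : q ∈ Submodule.span ℝ (L : Set V) := by rw [hLspan]; trivial
  obtain ⟨T, hTL, hqT⟩ := Submodule.mem_span_finite_of_mem_span hqspan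
  obtain ⟨f, -, hf⟩ := Submodule.mem_span_finset.mp hqT
  -- denominators
  obtain ⟨mq, hmq, hmqL⟩ := hden q hq
  choose mg hmg hmgL using fun (g : T) => hden g.1 (hLQ (hTL g.2))
  set D : ℕ := mq * ∏ g ∈ T.attach, mg g with hD
  have hDpos : 0 < D := Nat.mul_pos hmq (Finset.prod_pos fun g _ => hmg g)
  have hDq : (D : ℝ) • q ∈ L₀ := by
    have h : (D : ℝ) • q = (∏ g ∈ T.attach, mg g : ℕ) • ((mq : ℝ) • q) := by
      rw [← Nat.cast_smul_eq_nsmul ℝ, smul_smul, hD]; push_cast; ring_nf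
    rw [h]
    exact nsmul_mem hmqL _
  have hDg : ∀ g : T, (D : ℝ) • g.1 ∈ L₀ := by
    intro g
    have hdvd : mg g ∣ D := by
      refine Dvd.dvd.mul_left ?_ mq
      exact Finset.dvd_prod_of_mem (fun x => mg x) (Finset.mem_attach T g)
    obtain ⟨c, hc⟩ := hdvd
    have h : (D : ℝ) • g.1 = c • ((mg g : ℝ) • g.1) := by
      rw [← Nat.cast_smul_eq_nsmul ℝ, smul_smul, hc]; push_cast; ring_nf
    rw [h]
    exact nsmul_mem (hmgL g) c
  -- the sequence of box remainders
  set z : ℕ → V := fun k => (k : ℝ) • q - ∑ g ∈ T.attach, (⌊(k : ℝ) * f g⌋ : ℝ) • g.1 with hz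
  set R : ℝ := ∑ g ∈ T.attach, ‖g.1‖ with hR
  have hfq : ∀ a : ℝ, a • q = ∑ g ∈ T.attach, (a * f g.1) • g.1 := by
    intro a
    rw [← hf, Finset.smul_sum, ← Finset.sum_attach T (fun x => a • (f x • x))]
    exact Finset.sum_congr rfl fun g _ => smul_smul a (f g.1) g.1
  have hzbound : ∀ k, ‖z k‖ ≤ R := by
    intro k
    have h1 : z k = ∑ g ∈ T.attach, ((k : ℝ) * f g.1 - (⌊(k : ℝ) * f g.1⌋ : ℝ)) • g.1 := by
      rw [hz]
      simp only [sub_smul]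
      rw [Finset.sum_sub_distrib, hfq (k : ℝ)]
    rw [h1, hR]
    refine (norm_sum_le _ _).trans (Finset.sum_le_sum fun g _ => ?_)
    rw [norm_smul]
    have h2 : |(k : ℝ) * f g.1 - (⌊(k : ℝ) * f g.1⌋ : ℝ)| ≤ 1 := by
      rw [abs_of_nonneg (by linarith [Int.floor_le ((k : ℝ) * f g.1)])]
      linarith [Int.lt_floor_add_one ((k : ℝ) * f g.1)]
    calc |(k : ℝ) * f g.1 - (⌊(k : ℝ) * f g.1⌋ : ℝ)| * ‖g.1‖ ≤ 1 * ‖g.1‖ :=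
          mul_le_mul_of_nonneg_right h2 (norm_nonneg g.1)
      _ = ‖g.1‖ := one_mul _
  have hzmem : ∀ k, (D : ℝ) • z k ∈ L₀ := by
    intro k
    rw [hz]
    simp only [smul_sub, Finset.smul_sum]
    refine sub_mem ?_ (AddSubgroup.sum_mem L₀ fun g _ => ?_)
    · have h : (D : ℝ) • (k : ℝ) • q = (k : ℕ) • ((D : ℝ) • q) := by
        rw [← Nat.cast_smul_eq_nsmul ℝ (k : ℕ), smul_smul, smul_smul]; ring_nf
      rw [h]
      exact nsmul_mem hDq k
    · have h : (D : ℝ) • (⌊(k : ℝ) * f g.1⌋ : ℝ) • g.1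
          = (⌊(k : ℝ) * f g.1⌋ : ℤ) • ((D : ℝ) • g.1) := by
        rw [← Int.cast_smul_eq_zsmul ℝ, smul_smul, smul_smul]; ring_nf
      rw [h]
      exact zsmul_mem (hDg g) _
  -- pigeonhole
  have hfin : {y : V | y ∈ L₀ ∧ ‖y‖ ≤ (D : ℝ) * R}.Finite :=
    lattice_ball_finite L₀ hL₀disc _
  have hmapsto : Set.MapsTo (fun k => (D : ℝ) • z k) Set.univ
      {y : V | y ∈ L₀ ∧ ‖y‖ ≤ (D : ℝ) * R} := by
    intro k _
    refine ⟨hzmem k, ?_⟩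
    rw [norm_smul]
    refine mul_le_mul ?_ (hzbound k) (norm_nonneg _) (by positivity)
    simp [abs_of_nonneg]
  obtain ⟨k, -, k', -, hkk', heq2⟩ :=
    Set.infinite_univ.exists_ne_map_eq_of_mapsTo hmapsto hfin
  have hzeq : z k = z k' := by
    have hD0 : (D : ℝ) ≠ 0 := by positivity
    exact smul_right_injective V hD0 heq2
  have hkey : ∀ a b : ℕ, z a = z b → ((a : ℝ) - (b : ℝ)) • q
      = ∑ g ∈ T.attach, ((⌊(a : ℝ) * f g.1⌋ : ℝ) - (⌊(b : ℝ) * f g.1⌋ : ℝ)) • g.1 := by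
    intro a b hab
    have e1 : (a : ℝ) • q = z a + ∑ g ∈ T.attach, (⌊(a : ℝ) * f g.1⌋ : ℝ) • g.1 := by
      simp only [hz]; abel
    have e2 : (b : ℝ) • q = z b + ∑ g ∈ T.attach, (⌊(b : ℝ) * f g.1⌋ : ℝ) • g.1 := by
      simp only [hz]; abel
    rw [sub_smul, e1, e2, hab, add_sub_add_left_eq_sub, ← Finset.sum_sub_distrib]
    exact Finset.sum_congr rfl fun g _ => (sub_smul _ _ _).symm
  have hfin2 : ∀ a b : ℕ, b < a → z a = z b → ∃ N : ℕ, 0 < N ∧ (N : ℝ) • q ∈ L := by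
    intro a b hba hab
    refine ⟨a - b, Nat.sub_pos_of_lt hba, ?_⟩
    have hcast : ((a - b : ℕ) : ℝ) = (a : ℝ) - (b : ℝ) := by
      rw [Nat.cast_sub hba.le]
    rw [hcast, hkey a b hab]
    refine AddSubgroup.sum_mem L fun g _ => ?_
    have h : ((⌊(a : ℝ) * f g.1⌋ : ℝ) - (⌊(b : ℝ) * f g.1⌋ : ℝ)) • g.1
        = (⌊(a : ℝ) * f g.1⌋ - ⌊(b : ℝ) * f g.1⌋ : ℤ) • g.1 := by
      rw [← Int.cast_smul_eq_zsmul ℝ]; push_cast; ring_nf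
    rw [h]
    exact zsmul_mem (hTL g.2) _
  rcases hkk'.lt_or_gt with hlt | hlt
  · exact hfin2 k' k hlt hzeq.symm
  · exact hfin2 k k' hlt hzeq

private theorem cone_decomp {V : Type*} [AddCommGroup V] [Module ℝ V]
    [FiniteDimensional ℝ V] (P : Set V) (hP : IsPolyhedralCone P) (K : Set V)
    (hPsub : P ⊆ convexHull ℝ K) (M : Set V)
    (hscale : ∀ q ∈ K, ∃ u ∈ M, ∃ c : ℝ, 0 < c ∧ u = c • q) :
    ∃ A : Finset V, (↑A : Set V) ⊆ M ∧
      ∀ x ∈ P, ∃ Tc : V → ℝ, (∀ u, 0 ≤ Tc u) ∧ x = ∑ u ∈ A, Tc u • u := by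
  classical
  obtain ⟨s, hs⟩ := hP
  obtain ⟨ι, hι, v, hv, hx⟩ := mw_gen s
  have hgen : ∀ i : ι, ∃ B : Finset V, (↑B : Set V) ⊆ M ∧ ∃ Tc : V → ℝ,
      (∀ w, 0 ≤ Tc w) ∧ v i = ∑ w ∈ B, Tc w • w := by
    intro i
    have hviP : v i ∈ P := by rw [hs]; exact fun ξ hξ => hv i ξ hξ
    have hvihull : v i ∈ convexHull ℝ K := hPsub hviP
    rw [_root_.convexHull_eq] at hvihull
    obtain ⟨κ, tset, wc, zf, hw0, hw1, hzK, hcm⟩ := hvihull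
    rw [Finset.centerMass_eq_of_sum_1 _ _ hw1] at hcm
    choose uf hufM cf hcf0 hcfeq using fun (a : κ) (ha : a ∈ tset) => hscale (zf a) (hzK a ha)
    refine ⟨tset.attach.image (fun a => uf a.1 a.2), ?_, ?_⟩
    · intro w hw
      simp only [Finset.coe_image, Set.mem_image] at hw
      obtain ⟨a, _, rfl⟩ := hw
      exact hufM a.1 a.2
    · refine ⟨fun w => ∑ a ∈ tset.attach.filter (fun a => uf a.1 a.2 = w),
        wc a.1 / cf a.1 a.2, fun w => Finset.sum_nonneg fun a ha => ?_, ?_⟩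
      · exact div_nonneg (hw0 a.1 a.2) (hcf0 a.1 a.2).le
      · rw [Finset.sum_image' (fun a => (wc a.1 / cf a.1 a.2) • uf a.1 a.2) ?_]
        · rw [← hcm, ← Finset.sum_attach tset (fun a => wc a • zf a)]
          refine Finset.sum_congr rfl fun a _ => ?_
          rw [hcfeq a.1 a.2, smul_smul, div_mul_cancel₀ _ (hcf0 a.1 a.2).ne']
        · intro a _
          rw [Finset.sum_smul]
          refine Finset.sum_congr rfl fun b hb => ?_
          rw [Finset.mem_filter] at hb
          show (wc b.1 / cf b.1 b.2) • uf a.1 a.2 = (wc b.1 / cf b.1 b.2) • uf b.1 b.2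
          rw [hb.2]
  choose B hBM Tc hTc0 hTceq using hgen
  refine ⟨Finset.univ.biUnion B, ?_, ?_⟩
  · intro w hw
    simp only [Finset.coe_biUnion, Finset.mem_coe, Set.mem_iUnion] at hw
    obtain ⟨i, -, hi⟩ := hw
    exact hBM i hi
  · intro x hxP
    have hxP' : ∀ ξ ∈ s, 0 ≤ ξ x := by rw [hs] at hxP; exact hxP
    obtain ⟨t, ht0, htx⟩ := hx x hxP'
    refine ⟨fun w => ∑ i, t i * (if w ∈ B i then Tc i w else 0), ?_, ?_⟩
    · intro w
      refine Finset.sum_nonneg fun i _ => mul_nonneg (ht0 i) ?_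
      split_ifs
      · exact hTc0 i w
      · exact le_refl 0
    · have key : ∀ i : ι, ∑ w ∈ Finset.univ.biUnion B,
          (if w ∈ B i then Tc i w else 0) • w = v i := by
        intro i
        rw [← Finset.sum_subset (Finset.subset_biUnion_of_mem B (Finset.mem_univ i))
          (fun w _ hw => by rw [if_neg hw, zero_smul])]
        rw [hTceq i]
        exact Finset.sum_congr rfl fun w hw => by rw [if_pos hw]
      calc x = ∑ i, t i • v i := htx
        _ = ∑ i, t i • ∑ w ∈ Finset.univ.biUnion B,
              (if w ∈ B i then Tc i w else 0) • w := by
            exact Finset.sum_congr rfl fun i _ => by rw [key i]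
        _ = ∑ i, ∑ w ∈ Finset.univ.biUnion B,
              (t i * (if w ∈ B i then Tc i w else 0)) • w := by
            refine Finset.sum_congr rfl fun i _ => ?_
            rw [Finset.smul_sum]
            exact Finset.sum_congr rfl fun w _ => by rw [smul_smul]
        _ = ∑ w ∈ Finset.univ.biUnion B,
              ∑ i, (t i * (if w ∈ B i then Tc i w else 0)) • w := Finset.sum_comm
        _ = ∑ w ∈ Finset.univ.biUnion B,
              (∑ i, t i * (if w ∈ B i then Tc i w else 0)) • w := by
            exact Finset.sum_congr rfl fun w _ => (Finset.sum_smul).symm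

/-- Let `Γ ≤ GL(V)` preserve an open nondegenerate convex cone `C`
and a lattice `L₀` (which defines the rational points `Q`). If some polyhedral
cone `Pi ⊆ C_+ := convexHull (closure C ∩ Q)` satisfies `Γ·Π ⊇ C`, then for every
`Γ`-invariant lattice `L ⊆ Q`, the group `Γ` has only finitely many orbits on the
set of extreme points of `convexHull (C ∩ L)`. -/
theorem stmt_12 {V : Type*} [NormedAddCommGroup V] [NormedSpace ℝ V]
    [FiniteDimensional ℝ V]
    (C : Set V) (hCopen : IsOpen C) (hCconv : Convex ℝ C) (hCne : C.Nonempty)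
    (hCcone : ∀ x ∈ C, ∀ t : ℝ, 0 < t → t • x ∈ C)
    (hCnd : ∀ x v : V, v ≠ 0 → ¬ ∀ t : ℝ, x + t • v ∈ C)
    (L₀ : AddSubgroup V) (hL₀disc : DiscreteTopology L₀)
    (hL₀span : Submodule.span ℝ (L₀ : Set V) = ⊤)
    (Q : Set V) (hQ : Q = {v : V | ∃ (q : ℚ) (l : V), l ∈ L₀ ∧ v = (q : ℝ) • l})
    (Γ : Subgroup (LinearMap.GeneralLinearGroup ℝ V))
    (hΓC : ∀ γ ∈ Γ, (γ : V →ₗ[ℝ] V) '' C = C)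
    (hΓL₀ : ∀ γ ∈ Γ, (γ : V →ₗ[ℝ] V) '' (L₀ : Set V) = (L₀ : Set V))
    (Pi : Set V) (hPi : IsPolyhedralCone Pi)
    (hPisub : Pi ⊆ convexHull ℝ (closure C ∩ Q))
    (hPicov : C ⊆ ⋃ γ ∈ Γ, (γ : V →ₗ[ℝ] V) '' Pi) :
    ∀ L : AddSubgroup V, DiscreteTopology L →
      Submodule.span ℝ (L : Set V) = ⊤ → (L : Set V) ⊆ Q →
      (∀ γ ∈ Γ, (γ : V →ₗ[ℝ] V) '' (L : Set V) = (L : Set V)) →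
      ∃ S : Set V, S.Finite ∧
        Set.extremePoints ℝ (convexHull ℝ (C ∩ (L : Set V))) ⊆
          ⋃ γ ∈ Γ, (γ : V →ₗ[ℝ] V) '' S := by
  classical
  intro L hLdisc hLspan hLQ hΓL
  set H : Set V := convexHull ℝ (C ∩ (L : Set V)) with hH
  set E : Set V := Set.extremePoints ℝ H with hE
  -- basic cone facts
  have h0cl : (0 : V) ∈ closure C := by
    obtain ⟨x₀, hx₀⟩ := hCne
    have htend : Filter.Tendsto (fun n : ℕ => (1 / ((n : ℝ) + 1)) • x₀)
        Filter.atTop (nhds 0) := by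
      have h1 := tendsto_one_div_add_atTop_nhds_zero_nat (𝕜 := ℝ)
      have h2 := h1.smul_const x₀
      rwa [zero_smul] at h2
    refine mem_closure_of_tendsto htend ?_
    filter_upwards with n
    exact hCcone x₀ hx₀ _ (by positivity)
  have hsmulcl : ∀ c : ℝ, 0 ≤ c → ∀ x ∈ closure C, c • x ∈ closure C := by
    intro c hc x hx
    rcases hc.eq_or_lt with h | h
    · rw [← h, zero_smul]; exact h0cl
    · exact map_mem_closure (continuous_const_smul c) hx (fun y hy => hCcone y hy c h)
  have haddCcl : ∀ a ∈ C, ∀ b ∈ closure C, a + b ∈ C := by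
    intro a ha b hb
    have hmid : (1 / 2 : ℝ) • a + (1 / 2 : ℝ) • b ∈ interior C :=
      hCconv.combo_interior_closure_mem_interior (by rwa [hCopen.interior_eq]) hb
        (by norm_num) (by norm_num) (by norm_num)
    have heq : a + b = (2 : ℝ) • ((1 / 2 : ℝ) • a + (1 / 2 : ℝ) • b) := by module
    rw [heq]
    exact hCcone _ (by rwa [hCopen.interior_eq] at hmid) 2 two_pos
  have haddclcl : ∀ a ∈ closure C, ∀ b ∈ closure C, a + b ∈ closure C := by
    intro a ha b hb
    have hmid : (1 / 2 : ℝ) • a + (1 / 2 : ℝ) • b ∈ closure C :=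
      hCconv.closure ha hb (by norm_num) (by norm_num) (by norm_num)
    have heq : a + b = (2 : ℝ) • ((1 / 2 : ℝ) • a + (1 / 2 : ℝ) • b) := by module
    rw [heq]
    exact hsmulcl 2 (by norm_num) _ hmid
  have hsumcl : ∀ (A : Finset V) (Tc : V → ℝ), (∀ u, 0 ≤ Tc u) →
      (∀ u ∈ A, u ∈ closure C) → ∑ u ∈ A, Tc u • u ∈ closure C := by
    intro A Tc h0 hcl
    refine Finset.sum_induction _ (fun y => y ∈ closure C)
      (fun a b ha hb => haddclcl a ha b hb) h0cl ?_
    intro u hu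
    exact hsmulcl (Tc u) (h0 u) u (hcl u hu)
  have hEC : E ⊆ C ∩ (L : Set V) := by
    rw [hE, hH]; exact extremePoints_convexHull_subset
  -- decomposition of Pi over a fixed finite set of lattice vectors in the closed cone
  have hscale : ∀ q ∈ closure C ∩ Q, ∃ u ∈ closure C ∩ (L : Set V),
      ∃ c : ℝ, 0 < c ∧ u = c • q := by
    intro q hq
    obtain ⟨N, hN, hNL⟩ := exists_nsmul_mem_lattice L₀ hL₀disc Q hQ L hLspan hLQ q hq.2
    exact ⟨(N : ℝ) • q, ⟨hsmulcl N (by positivity) q hq.1, hNL⟩, N,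
      by exact_mod_cast hN, rfl⟩
  obtain ⟨A, hAM, hdecomp⟩ := cone_decomp Pi hPi _ hPisub _ hscale
  set R : ℝ := ∑ u ∈ A, ‖u‖ with hR
  -- extreme points in Pi are bounded
  have hbound : ∀ x ∈ E, x ∈ Pi → ‖x‖ ≤ R := by
    intro x hxE hxPi
    obtain ⟨Tc, hTc0, hTeq⟩ := hdecomp x hxPi
    by_contra hRlt
    push_neg at hRlt
    have hbig : ∃ u₀ ∈ A, u₀ ≠ 0 ∧ 1 < Tc u₀ := by
      by_contra hno
      push_neg at hno
      have hxle : ‖x‖ ≤ R := by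
        rw [hTeq, hR]
        refine (norm_sum_le _ _).trans (Finset.sum_le_sum fun u hu => ?_)
        by_cases h0 : u = 0
        · simp [h0]
        · rw [norm_smul, Real.norm_eq_abs, abs_of_nonneg (hTc0 u)]
          nlinarith [norm_nonneg u, hno u hu h0, hTc0 u]
      linarith
    obtain ⟨u₀, hu₀A, hu₀0, hTu₀⟩ := hbig
    have hu₀cl : u₀ ∈ closure C := (hAM hu₀A).1
    have hu₀L : u₀ ∈ L := (hAM hu₀A).2
    have hxC : x ∈ C := (hEC hxE).1
    have hxL : x ∈ L := (hEC hxE).2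
    have hy : x - Tc u₀ • u₀ ∈ closure C := by
      have heq : x - Tc u₀ • u₀ = ∑ u ∈ A.erase u₀, Tc u • u := by
        rw [hTeq, ← Finset.add_sum_erase A _ hu₀A]
        abel
      rw [heq]
      exact hsumcl _ _ hTc0 (fun u hu => (hAM (Finset.mem_of_mem_erase hu)).1)
    have hT0 : (0:ℝ) < Tc u₀ := lt_trans one_pos hTu₀
    have hc : x - u₀ ∈ C := by
      have hcombo : (1 - (Tc u₀)⁻¹) • x + (Tc u₀)⁻¹ • (x - Tc u₀ • u₀) = x - u₀ := by
        rw [smul_sub, smul_smul, inv_mul_cancel₀ hT0.ne']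
        module
      have hint := hCconv.combo_interior_closure_mem_interior
        (by rwa [hCopen.interior_eq] : x ∈ interior C) hy
        (by rw [sub_pos]; exact inv_lt_one_of_one_lt₀ hTu₀)
        (inv_nonneg.mpr hT0.le) (by ring)
      rw [hcombo] at hint
      rwa [hCopen.interior_eq] at hint
    have hd : x + u₀ ∈ C := haddCcl x hxC u₀ hu₀cl
    have hcH : x - u₀ ∈ H := subset_convexHull ℝ _ ⟨hc, sub_mem hxL hu₀L⟩
    have hdH : x + u₀ ∈ H := subset_convexHull ℝ _ ⟨hd, add_mem hxL hu₀L⟩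
    have hseg : x ∈ openSegment ℝ (x - u₀) (x + u₀) := by
      refine ⟨1/2, 1/2, by norm_num, by norm_num, by norm_num, ?_⟩
      module
    have hpair := hxE.2 hcH hdH hseg
    exact hu₀0 (sub_eq_self.mp hpair)
  -- the finite set
  refine ⟨E ∩ Pi, ?_, ?_⟩
  · refine (lattice_ball_finite L hLdisc R).subset ?_
    intro x hx
    exact ⟨(hEC hx.1).2, hbound x hx.1 hx.2⟩
  -- group facts
  have hcancel : ∀ γ : LinearMap.GeneralLinearGroup ℝ V, ∀ z : V,
      ((γ⁻¹ : LinearMap.GeneralLinearGroup ℝ V) : V →ₗ[ℝ] V) ((γ : V →ₗ[ℝ] V) z) = z := by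
    intro γ z
    have h1 : ((γ⁻¹ : LinearMap.GeneralLinearGroup ℝ V) : V →ₗ[ℝ] V) ∘ₗ (γ : V →ₗ[ℝ] V)
        = LinearMap.id := by
      have := inv_mul_cancel γ
      have h2 := congrArg (Units.val) this
      rw [Units.val_mul] at h2
      exact h2
    exact LinearMap.congr_fun h1 z
  have hcancel' : ∀ γ : LinearMap.GeneralLinearGroup ℝ V, ∀ z : V,
      (γ : V →ₗ[ℝ] V) (((γ⁻¹ : LinearMap.GeneralLinearGroup ℝ V) : V →ₗ[ℝ] V) z) = z := by
    intro γ z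
    have := hcancel γ⁻¹ z
    rwa [inv_inv] at this
  have hinj : ∀ γ : LinearMap.GeneralLinearGroup ℝ V,
      Function.Injective (γ : V →ₗ[ℝ] V) := by
    intro γ a b hab
    have ha := hcancel γ a
    have hb := hcancel γ b
    rw [← ha, ← hb, hab]
  have hHinv : ∀ γ ∈ Γ, (γ : V →ₗ[ℝ] V) '' H = H := by
    intro γ hγ
    rw [hH, LinearMap.image_convexHull, Set.image_inter (hinj γ), hΓC γ hγ, hΓL γ hγ]
  have hEinv : ∀ γ ∈ Γ, ∀ x ∈ E,
      ((γ⁻¹ : LinearMap.GeneralLinearGroup ℝ V) : V →ₗ[ℝ] V) x ∈ E := by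
    intro γ hγ x hxE
    have hγi : γ⁻¹ ∈ Γ := inv_mem hγ
    constructor
    · rw [← hHinv γ⁻¹ hγi]
      exact ⟨x, hxE.1, rfl⟩
    · intro a haH b hbH hseg
      obtain ⟨ta, tb, hta, htb, htab, hcomb⟩ := hseg
      have hcomb2 : ta • ((γ : V →ₗ[ℝ] V) a) + tb • ((γ : V →ₗ[ℝ] V) b) = x := by
        have hmap := congrArg (γ : V →ₗ[ℝ] V) hcomb
        rw [map_add, map_smul, map_smul, hcancel' γ x] at hmap
        exact hmap
      have haH' : (γ : V →ₗ[ℝ] V) a ∈ H := by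
        rw [← hHinv γ hγ]; exact ⟨a, haH, rfl⟩
      have hbH' : (γ : V →ₗ[ℝ] V) b ∈ H := by
        rw [← hHinv γ hγ]; exact ⟨b, hbH, rfl⟩
      have hpair := hxE.2 haH' hbH' ⟨ta, tb, hta, htb, htab, hcomb2⟩
      rw [← hpair, hcancel γ a]
  -- coverage
  intro x hxE
  have hxC : x ∈ C := (hEC hxE).1
  have hxcov := hPicov hxC
  rw [Set.mem_iUnion₂] at hxcov
  obtain ⟨γ, hγ, p, hpPi, hpx⟩ := hxcov
  rw [Set.mem_iUnion₂]
  refine ⟨γ, hγ, p, ⟨?_, hpPi⟩, hpx⟩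
  have hp := hEinv γ hγ x hxE
  have hpeq : ((γ⁻¹ : LinearMap.GeneralLinearGroup ℝ V) : V →ₗ[ℝ] V) x = p := by
    rw [← hpx, hcancel γ p]
  rwa [hpeq] at hp
end

section
/- Let Γ and Γ' be subgroups of GL(V) both preserving the open nondegenerate cone C, both preserving lattices in V(ℚ), and suppose Γ' contains Γ as a subgroup of finite index. If (C_+, Γ) is of polyhedral type, then (C_+, Γ') is of polyhedral type; and conversely if Γ' is a finite-index subgroup of Γ and (C_+, Γ) is of polyhedral type then so is (C_+, Γ'). -/
/-- `(C_+, Γ)` is of polyhedral type: some polyhedral cone inside `C_+` has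
`Γ`-orbit equal to `C_+`. -/
def PolyhedralType {V : Type*} [NormedAddCommGroup V] [NormedSpace ℝ V]
    (Γ : Subgroup (LinearMap.GeneralLinearGroup ℝ V)) (Cp : Set V) : Prop :=
  ∃ Pi : Set V, IsPolyhedralCone Pi ∧ Pi ⊆ Cp ∧
    (⋃ γ ∈ Γ, (γ : V →ₗ[ℝ] V) '' Pi) = Cp



open Pointwise Submodule

section Aux

set_option linter.unusedSectionVars false
set_option linter.unusedVariables false

noncomputable def ratModuleAux (V : Type*) [AddCommGroup V] [Module ℝ V] : Module ℚ V :=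
  Module.compHom V (algebraMap ℚ ℝ)

attribute [local instance] ratModuleAux

lemma ratSmul_def {V : Type*} [AddCommGroup V] [Module ℝ V] (q : ℚ) (v : V) :
    q • v = (q : ℝ) • v := rfl

instance ratTowerAux (V : Type*) [AddCommGroup V] [Module ℝ V] : IsScalarTower ℚ ℝ V :=
  ⟨fun q r v => by rw [Rat.smul_def, mul_smul, ratSmul_def]⟩

variable {V : Type*} [AddCommGroup V] [Module ℝ V]

lemma poly_zero_mem {P : Set V} (hP : IsPolyhedralCone P) : (0 : V) ∈ P := by
  obtain ⟨s, rfl⟩ := hP; intro ξ hξ; simp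

lemma poly_inter {P R : Set V} (hP : IsPolyhedralCone P) (hR : IsPolyhedralCone R) :
    IsPolyhedralCone (P ∩ R) := by
  classical
  obtain ⟨s, rfl⟩ := hP; obtain ⟨t, rfl⟩ := hR
  refine ⟨s ∪ t, ?_⟩
  ext x; simp only [Set.mem_inter_iff, Set.mem_setOf_eq, Finset.mem_union]
  constructor
  · rintro ⟨h1, h2⟩ ξ (h | h); exacts [h1 ξ h, h2 ξ h]
  · intro h; exact ⟨fun ξ hξ => h ξ (Or.inl hξ), fun ξ hξ => h ξ (Or.inr hξ)⟩

lemma poly_preimage {W : Type*} [AddCommGroup W] [Module ℝ W] (f : W →ₗ[ℝ] V)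
    {P : Set V} (hP : IsPolyhedralCone P) : IsPolyhedralCone (f ⁻¹' P) := by
  classical
  obtain ⟨s, rfl⟩ := hP
  refine ⟨s.image (fun ξ => ξ.comp f), ?_⟩
  ext x
  simp only [Set.mem_preimage, Set.mem_setOf_eq, Finset.mem_image]
  constructor
  · rintro h ξ ⟨η, hη, rfl⟩; exact h η hη
  · intro h ξ hξ; exact h (ξ.comp f) ⟨ξ, hξ, rfl⟩

lemma poly_lineProj {P : Set V} (hP : IsPolyhedralCone P) (e : V) :
    IsPolyhedralCone {x : V | ∃ c : ℝ, x + c • e ∈ P} := by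
  classical
  obtain ⟨s, rfl⟩ := hP
  set zer : Finset (V →ₗ[ℝ] ℝ) := s.filter (fun ξ => ξ e = 0) with hzer
  set pos : Finset (V →ₗ[ℝ] ℝ) := s.filter (fun ξ => 0 < ξ e) with hpos
  set neg : Finset (V →ₗ[ℝ] ℝ) := s.filter (fun ξ => ξ e < 0) with hneg
  set comb : Finset (V →ₗ[ℝ] ℝ) :=
    (pos ×ˢ neg).image (fun p => (p.1 e) • p.2 - (p.2 e) • p.1) with hcomb
  refine ⟨zer ∪ comb, ?_⟩
  ext x
  simp only [Set.mem_setOf_eq, Finset.mem_union]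
  constructor
  · rintro ⟨c, hc⟩ ξ hξ
    rcases hξ with hξ | hξ
    · have h0 : ξ e = 0 := (Finset.mem_filter.mp hξ).2
      have := hc ξ (Finset.mem_filter.mp hξ).1
      simpa [map_add, map_smul, h0] using this
    · obtain ⟨⟨ζ, η⟩, hmem, rfl⟩ := Finset.mem_image.mp hξ
      obtain ⟨hζ, hη⟩ := Finset.mem_product.mp hmem
      have haz : 0 < ζ e := (Finset.mem_filter.mp hζ).2
      have hbz : η e < 0 := (Finset.mem_filter.mp hη).2
      have h1 := hc ζ (Finset.mem_filter.mp hζ).1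
      have h2 := hc η (Finset.mem_filter.mp hη).1
      simp only [map_add, map_smul, smul_eq_mul] at h1 h2
      simp only [LinearMap.sub_apply, LinearMap.smul_apply, smul_eq_mul]
      nlinarith [mul_nonneg haz.le h2, mul_nonneg (neg_nonneg.mpr hbz.le) h1]
  · intro h
    have hz : ∀ ξ ∈ zer, 0 ≤ ξ x := fun ξ hξ => h ξ (Or.inl hξ)
    by_cases hp : pos.Nonempty
    · set c := pos.sup' hp (fun ξ => -(ξ x) / ξ e) with hcdef
      obtain ⟨ζ, hζmem, hζeq⟩ := Finset.exists_mem_eq_sup' hp (fun ξ => -(ξ x) / ξ e)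
      have haz : 0 < ζ e := (Finset.mem_filter.mp hζmem).2
      refine ⟨c, fun ξ hξ => ?_⟩
      simp only [map_add, map_smul, smul_eq_mul]
      rcases lt_trichotomy (ξ e) 0 with hlt | heq | hgt
      · -- ξ ∈ neg; use combined inequality with ζ
        have hξneg : ξ ∈ neg := Finset.mem_filter.mpr ⟨hξ, hlt⟩
        have hcombmem : (ζ e) • ξ - (ξ e) • ζ ∈ comb := by
          rw [hcomb]
          exact Finset.mem_image.mpr ⟨(ζ, ξ), Finset.mem_product.mpr ⟨hζmem, hξneg⟩, rfl⟩
        have hcb := h _ (Or.inr hcombmem)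
        simp only [LinearMap.sub_apply, LinearMap.smul_apply, smul_eq_mul] at hcb
        have hcval : c = -(ζ x) / ζ e := by rw [hcdef, hζeq]
        have hac : ζ e * c = -(ζ x) := by
          rw [hcval]; field_simp
        nlinarith [mul_pos haz (mul_pos haz (neg_pos.mpr hlt))]
      · have := hz ξ (Finset.mem_filter.mpr ⟨hξ, heq⟩)
        simpa [heq] using this
      · have hξpos : ξ ∈ pos := Finset.mem_filter.mpr ⟨hξ, hgt⟩
        have hle : -(ξ x) / ξ e ≤ c := by
          exact Finset.le_sup' (fun ξ => -(ξ x) / ξ e) hξpos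
        have : -(ξ x) ≤ c * ξ e := by
          rw [div_le_iff₀ hgt] at hle; linarith
        linarith
    · by_cases hn : neg.Nonempty
      · set c := neg.inf' hn (fun ξ => -(ξ x) / ξ e) with hcdef
        refine ⟨c, fun ξ hξ => ?_⟩
        simp only [map_add, map_smul, smul_eq_mul]
        rcases lt_trichotomy (ξ e) 0 with hlt | heq | hgt
        · have hξneg : ξ ∈ neg := Finset.mem_filter.mpr ⟨hξ, hlt⟩
          have hle : c ≤ -(ξ x) / ξ e :=
          Finset.inf'_le (fun ξ => -(ξ x) / ξ e) hξneg
          have : -(ξ x) ≤ c * ξ e := by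
            rw [le_div_iff_of_neg hlt] at hle; linarith
          linarith
        · have := hz ξ (Finset.mem_filter.mpr ⟨hξ, heq⟩)
          simpa [heq] using this
        · exact absurd ⟨ξ, Finset.mem_filter.mpr ⟨hξ, hgt⟩⟩ hp
      · refine ⟨0, fun ξ hξ => ?_⟩
        have heq : ξ e = 0 := by
          rcases lt_trichotomy (ξ e) 0 with hlt | heq | hgt
          · exact absurd ⟨ξ, Finset.mem_filter.mpr ⟨hξ, hlt⟩⟩ hn
          · exact heq
          · exact absurd ⟨ξ, Finset.mem_filter.mpr ⟨hξ, hgt⟩⟩ hp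
        have := hz ξ (Finset.mem_filter.mpr ⟨hξ, heq⟩)
        simpa [heq] using this

lemma poly_spanProj {P : Set V} (hP : IsPolyhedralCone P) :
    ∀ l : List V, IsPolyhedralCone {x : V | ∃ y ∈ Submodule.span ℝ {z | z ∈ l}, x + y ∈ P} := by
  intro l
  induction l generalizing P with
  | nil =>
      have : {x : V | ∃ y ∈ Submodule.span ℝ {z : V | z ∈ ([] : List V)}, x + y ∈ P} = P := by
        ext x
        simp only [Set.mem_setOf_eq]
        constructor
        · rintro ⟨y, hy, hxy⟩
          have hy0 : y = 0 := by
            simp only [List.not_mem_nil, Set.setOf_false, Submodule.span_empty,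
              Submodule.mem_bot] at hy
            exact hy
          simpa [hy0] using hxy
        · intro hx; exact ⟨0, Submodule.zero_mem _, by simpa using hx⟩
      rw [this]; exact hP
  | cons e l ih =>
      have key : {x : V | ∃ y ∈ Submodule.span ℝ {z | z ∈ e :: l}, x + y ∈ P}
          = {x : V | ∃ c : ℝ, x + c • e ∈ {w : V | ∃ y ∈ Submodule.span ℝ {z | z ∈ l}, w + y ∈ P}} := by
        ext x
        simp only [Set.mem_setOf_eq]
        constructor
        · rintro ⟨y, hy, hxy⟩
          have : {z : V | z ∈ e :: l} = insert e {z : V | z ∈ l} := by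
            ext z; simp [List.mem_cons]
          rw [this] at hy
          obtain ⟨a, z, hz, rfl⟩ := Submodule.mem_span_insert.mp hy
          exact ⟨a, z, hz, by rw [show x + a • e + z = x + (a • e + z) by abel]; exact hxy⟩
        · rintro ⟨c, y, hy, hxy⟩
          refine ⟨c • e + y, ?_, by rwa [← add_assoc]⟩
          have : {z : V | z ∈ e :: l} = insert e {z : V | z ∈ l} := by
            ext z; simp [List.mem_cons]
          rw [this]
          exact Submodule.add_mem _ (Submodule.smul_mem _ _ (Submodule.subset_span (Set.mem_insert _ _)))
            (Submodule.span_mono (Set.subset_insert _ _) hy)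
      rw [key]
      exact poly_lineProj (ih hP) e

lemma poly_add [Module.Finite ℝ V] {A B : Set V} (hA : IsPolyhedralCone A)
    (hB : IsPolyhedralCone B) : IsPolyhedralCone (A + B) := by
  classical
  set f : (V × V) →ₗ[ℝ] V := LinearMap.fst ℝ V V - LinearMap.snd ℝ V V with hf
  have hQ : IsPolyhedralCone ((f ⁻¹' A) ∩ ((LinearMap.snd ℝ V V) ⁻¹' B)) :=
    poly_inter (poly_preimage f hA) (poly_preimage _ hB)
  obtain ⟨t, ht⟩ : (⊤ : Submodule ℝ V).FG := Module.Finite.fg_top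
  set l : List (V × V) := t.toList.map (fun v => ((0, v) : V × V)) with hl
  have hspan : Submodule.span ℝ {z : V × V | z ∈ l} = Submodule.map (LinearMap.inr ℝ V V) ⊤ := by
    have hset : {z : V × V | z ∈ l} = (LinearMap.inr ℝ V V) '' ↑t := by
      ext z
      simp only [hl, Set.mem_setOf_eq, List.mem_map, Finset.mem_toList, Set.mem_image,
        Finset.mem_coe, LinearMap.coe_inr]
    rw [hset, ← Submodule.map_span, ht]
  set R : Set (V × V) :=
    {x : V × V | ∃ y ∈ Submodule.span ℝ {z : V × V | z ∈ l},
      x + y ∈ (f ⁻¹' A) ∩ ((LinearMap.snd ℝ V V) ⁻¹' B)} with hR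
  have hRpoly : IsPolyhedralCone R := poly_spanProj hQ l
  have key : A + B = (LinearMap.inl ℝ V V) ⁻¹' R := by
    ext x
    simp only [Set.mem_preimage, hR, Set.mem_setOf_eq, hspan, Submodule.map_top,
      LinearMap.mem_range, Set.mem_inter_iff]
    constructor
    · intro hx
      obtain ⟨a, ha, b, hb, rfl⟩ := Set.mem_add.mp hx
      refine ⟨(0, b), ⟨⟨b, rfl⟩, ?_, ?_⟩⟩
      · simp only [Set.mem_preimage, hf]
        simpa using ha
      · simpa using hb
    · rintro ⟨y, ⟨w, rfl⟩, h1, h2⟩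
      simp only [Set.mem_preimage, hf, LinearMap.sub_apply, LinearMap.fst_apply,
        LinearMap.snd_apply, LinearMap.inl_apply, LinearMap.inr_apply] at h1 h2
      refine Set.mem_add.mpr ⟨x - w, by simpa using h1, w, by simpa using h2, by abel⟩
  rw [key]
  exact poly_preimage _ hRpoly

lemma q_add_mem (L₀ : AddSubgroup V) (Q : Set V)
    (hQ : Q = {v : V | ∃ (q : ℚ) (l : V), l ∈ L₀ ∧ v = (q : ℝ) • l}) :
    ∀ x ∈ Q, ∀ y ∈ Q, x + y ∈ Q := by
  subst hQ
  rintro x ⟨q₁, l₁, hl₁, rfl⟩ y ⟨q₂, l₂, hl₂, rfl⟩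
  set a₁ : ℤ := q₁.num * q₂.den with ha₁
  set a₂ : ℤ := q₂.num * q₁.den with ha₂
  set n : ℤ := (q₁.den : ℤ) * q₂.den with hn
  have hd₁ : ((q₁.den : ℚ)) ≠ 0 := by exact_mod_cast q₁.den_nz
  have hd₂ : ((q₂.den : ℚ)) ≠ 0 := by exact_mod_cast q₂.den_nz
  have hnq : ((n : ℚ)) ≠ 0 := by
    rw [hn]; push_cast; exact mul_ne_zero hd₁ hd₂
  refine ⟨1 / (n : ℚ), a₁ • l₁ + a₂ • l₂,
    L₀.add_mem (L₀.zsmul_mem hl₁ a₁) (L₀.zsmul_mem hl₂ a₂), ?_⟩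
  have key₁ : q₁ * (n : ℚ) = (a₁ : ℚ) := by
    rw [hn, ha₁]; push_cast; rw [← mul_assoc, Rat.mul_den_eq_num]
  have key₂ : q₂ * (n : ℚ) = (a₂ : ℚ) := by
    rw [hn, ha₂]; push_cast
    rw [mul_comm ((q₁.den : ℚ)) ((q₂.den : ℚ)), ← mul_assoc, Rat.mul_den_eq_num]
  have e₁ : (1 / (n : ℚ)) * (a₁ : ℚ) = q₁ := by
    rw [← key₁]; field_simp
  have e₂ : (1 / (n : ℚ)) * (a₂ : ℚ) = q₂ := by
    rw [← key₂]; field_simp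
  rw [← Int.cast_smul_eq_zsmul ℝ a₁ l₁, ← Int.cast_smul_eq_zsmul ℝ a₂ l₂, smul_add,
    smul_smul, smul_smul]
  have c₁ : ((q₁ : ℝ)) = ((1 / (n : ℚ) : ℚ) : ℝ) * ((a₁ : ℤ) : ℝ) := by
    exact_mod_cast congrArg (fun q : ℚ => (q : ℝ)) e₁.symm
  have c₂ : ((q₂ : ℝ)) = ((1 / (n : ℚ) : ℚ) : ℝ) * ((a₂ : ℤ) : ℝ) := by
    exact_mod_cast congrArg (fun q : ℚ => (q : ℝ)) e₂.symm
  rw [c₁, c₂]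

section
variable {V : Type*} [NormedAddCommGroup V] [NormedSpace ℝ V] [FiniteDimensional ℝ V]
lemma lat_finrank (M : AddSubgroup V) (hdisc : DiscreteTopology M)
    (hspan : Submodule.span ℝ (M : Set V) = ⊤) :
    FiniteDimensional ℚ (span ℚ (M : Set V)) ∧
      Module.finrank ℚ (span ℚ (M : Set V)) = Module.finrank ℝ V := by
  classical
  set Mz := AddSubgroup.toIntSubmodule M with hMz
  haveI : DiscreteTopology Mz := hdisc
  haveI : IsZLattice ℝ Mz := ⟨by rw [hMz, AddSubgroup.coe_toIntSubmodule]; exact hspan⟩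
  haveI := ZLattice.module_finite ℝ Mz
  haveI := ZLattice.module_free ℝ Mz
  set ι := Module.Free.ChooseBasisIndex ℤ Mz
  set b : Module.Basis ι ℤ Mz := Module.Free.chooseBasis ℤ Mz
  set bR : Module.Basis ι ℝ V := Module.Basis.ofZLatticeBasis ℝ Mz b
  set v : ι → V := fun i => (b i : V) with hv
  have hbv : ∀ i, bR i = v i := fun i => Module.Basis.ofZLatticeBasis_apply ℝ Mz b i
  have hindR : LinearIndependent ℝ v := by
    have := bR.linearIndependent
    rwa [show ⇑bR = v from funext hbv] at this
  have hindQ : LinearIndependent ℚ v :=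
    hindR.restrict_scalars (by
      intro a b hab
      simpa using hab)
  have hspanv : span ℚ (Set.range v) = span ℚ (M : Set V) := by
    apply le_antisymm
    · refine span_le.mpr ?_
      rintro x ⟨i, rfl⟩
      exact subset_span (b i).2
    · refine span_le.mpr ?_
      intro m hm
      have hzspan : span ℤ (Set.range v) = Mz := by
        have himg : Set.range v = Mz.subtype '' Set.range ⇑b := by
          rw [← Set.range_comp]; rfl
        rw [himg, ← Submodule.map_span, b.span_eq, Submodule.map_subtype_top]
      have h1 : m ∈ span ℤ (Set.range v) := by
        rw [hzspan]; exact hm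
      have h2 : span ℤ (Set.range v) ≤ (span ℚ (Set.range v)).restrictScalars ℤ :=
        span_le.mpr subset_span
      exact h2 h1
  constructor
  · rw [← hspanv]
    exact FiniteDimensional.span_of_finite ℚ (Set.finite_range v)
  · rw [← hspanv, finrank_span_eq_card hindQ, Module.finrank_eq_card_basis bR]
end


lemma q_eq_span (L₀ : AddSubgroup V) (Q : Set V)
    (hQ : Q = {v : V | ∃ (q : ℚ) (l : V), l ∈ L₀ ∧ v = (q : ℝ) • l}) :
    Q = ↑(span ℚ (L₀ : Set V)) := by
  apply Set.eq_of_subset_of_subset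
  · rintro v hv
    rw [hQ] at hv
    obtain ⟨q, l, hl, rfl⟩ := hv
    rw [← ratSmul_def]
    exact smul_mem _ q (subset_span hl)
  · intro v hv
    induction hv using Submodule.span_induction with
    | mem x hx => exact hQ ▸ ⟨1, x, hx, by norm_num⟩
    | zero => exact hQ ▸ ⟨0, 0, L₀.zero_mem, by simp⟩
    | add x y _ _ hx hy => exact q_add_mem L₀ Q hQ x hx y hy
    | smul a x _ hx =>
        rw [hQ] at hx ⊢
        obtain ⟨q, l, hl, rfl⟩ := hx
        refine ⟨a * q, l, hl, ?_⟩
        rw [ratSmul_def, smul_smul]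
        push_cast
        ring_nf

lemma span_lat_eq {V : Type*} [NormedAddCommGroup V] [NormedSpace ℝ V] [FiniteDimensional ℝ V]
    (L₀ : AddSubgroup V) (hL₀disc : DiscreteTopology L₀)
    (hL₀span : span ℝ (L₀ : Set V) = ⊤)
    (Q : Set V) (hQ : Q = {v : V | ∃ (q : ℚ) (l : V), l ∈ L₀ ∧ v = (q : ℝ) • l})
    (L : AddSubgroup V) (hLdisc : DiscreteTopology L)
    (hLspan : span ℝ (L : Set V) = ⊤) (hLQ : (L : Set V) ⊆ Q) :
    span ℚ (L : Set V) = span ℚ (L₀ : Set V) := by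
  obtain ⟨fd₀, hr₀⟩ := lat_finrank L₀ hL₀disc hL₀span
  obtain ⟨fd, hr⟩ := lat_finrank L hLdisc hLspan
  haveI := fd₀
  refine Submodule.eq_of_le_of_finrank_le ?_ ?_
  · refine span_le.mpr ?_
    intro x hx
    have : x ∈ Q := hLQ hx
    rw [q_eq_span L₀ Q hQ] at this
    exact this
  · rw [hr₀, hr]

lemma cp_inv {V : Type*} [NormedAddCommGroup V] [NormedSpace ℝ V] [FiniteDimensional ℝ V]
    (C : Set V) (L₀ : AddSubgroup V) (hL₀disc : DiscreteTopology L₀)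
    (hL₀span : span ℝ (L₀ : Set V) = ⊤)
    (Q : Set V) (hQ : Q = {v : V | ∃ (q : ℚ) (l : V), l ∈ L₀ ∧ v = (q : ℝ) • l})
    (Cp : Set V) (hCp : Cp = convexHull ℝ (closure C ∩ Q))
    (γ : LinearMap.GeneralLinearGroup ℝ V) (hC : (γ : V →ₗ[ℝ] V) '' C = C)
    (L : AddSubgroup V) (hLdisc : DiscreteTopology L)
    (hLspan : span ℝ (L : Set V) = ⊤) (hLQ : (L : Set V) ⊆ Q)
    (hLinv : (γ : V →ₗ[ℝ] V) '' (L : Set V) = (L : Set V)) :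
    (γ : V →ₗ[ℝ] V) '' Cp = Cp := by
  set g : V →ₗ[ℝ] V := (γ : V →ₗ[ℝ] V) with hg
  have hinj : Function.Injective g :=
    (LinearMap.GeneralLinearGroup.toLinearEquiv γ).injective
  have hclC : g '' closure C = closure C := by
    set e : V ≃L[ℝ] V :=
      LinearEquiv.toContinuousLinearEquiv (LinearMap.GeneralLinearGroup.toLinearEquiv γ)
    have hcoe : ⇑e = ⇑g := rfl
    calc g '' closure C = e.toHomeomorph '' closure C := by rw [← hcoe]; rfl
      _ = closure (e.toHomeomorph '' C) := Homeomorph.image_closure _ _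
      _ = closure C := by rw [show e.toHomeomorph '' C = g '' C from by rw [← hcoe]; rfl, hC]
  have hQL : Q = ↑(span ℚ (L : Set V)) := by
    rw [q_eq_span L₀ Q hQ, span_lat_eq L₀ hL₀disc hL₀span Q hQ L hLdisc hLspan hLQ]
  have hgQ : g '' Q = Q := by
    rw [hQL]
    have : g '' ↑(span ℚ (L : Set V)) = ↑(map (g.restrictScalars ℚ) (span ℚ (L : Set V))) := by
      rfl
    rw [this, Submodule.map_span]
    have : (g.restrictScalars ℚ) '' (L : Set V) = (L : Set V) := hLinv
    rw [this]
  rw [hCp, g.image_convexHull, Set.image_inter hinj, hclC, hgQ]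

section GLpart
variable {V : Type*} [AddCommGroup V] [Module ℝ V]

lemma gl_image_eq_preimage (γ : LinearMap.GeneralLinearGroup ℝ V) (P : Set V) :
    (γ : V →ₗ[ℝ] V) '' P = ((γ⁻¹ : LinearMap.GeneralLinearGroup ℝ V) : V →ₗ[ℝ] V) ⁻¹' P := by
  ext x
  constructor
  · rintro ⟨y, hy, rfl⟩
    show (γ⁻¹ : LinearMap.GeneralLinearGroup ℝ V).val ((γ : V →ₗ[ℝ] V) y) ∈ P
    rw [show (γ⁻¹ : LinearMap.GeneralLinearGroup ℝ V).val ((γ : V →ₗ[ℝ] V) y)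
      = ((γ⁻¹ : LinearMap.GeneralLinearGroup ℝ V).val * γ.val) y from rfl, γ.inv_mul]
    exact hy
  · intro hx
    refine ⟨(γ⁻¹ : LinearMap.GeneralLinearGroup ℝ V).val x, hx, ?_⟩
    rw [show γ.val ((γ⁻¹ : LinearMap.GeneralLinearGroup ℝ V).val x)
      = (γ.val * (γ⁻¹ : LinearMap.GeneralLinearGroup ℝ V).val) x from rfl, γ.mul_inv]
    rfl

lemma poly_gl_image (γ : LinearMap.GeneralLinearGroup ℝ V) {P : Set V}
    (hP : IsPolyhedralCone P) : IsPolyhedralCone ((γ : V →ₗ[ℝ] V) '' P) := by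
  rw [gl_image_eq_preimage]; exact poly_preimage _ hP

variable [Module.Finite ℝ V]

noncomputable def coneSum (Pi0 : Set V) : List (LinearMap.GeneralLinearGroup ℝ V) → Set V
  | [] => Pi0
  | g :: l => ((g : V →ₗ[ℝ] V) '' Pi0) + coneSum Pi0 l

lemma coneSum_poly {Pi0 : Set V} (hPi0 : IsPolyhedralCone Pi0) :
    ∀ l, IsPolyhedralCone (coneSum Pi0 l)
  | [] => hPi0
  | g :: l => poly_add (poly_gl_image g hPi0) (coneSum_poly hPi0 l)

lemma coneSum_subset {Pi0 : Set V} {Cp : Set V} (hPi0 : Pi0 ⊆ Cp)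
    (hadd : ∀ x ∈ Cp, ∀ y ∈ Cp, x + y ∈ Cp) :
    ∀ l, (∀ g : LinearMap.GeneralLinearGroup ℝ V, g ∈ l → (g : V →ₗ[ℝ] V) '' Pi0 ⊆ Cp) →
      coneSum Pi0 l ⊆ Cp
  | [], _ => hPi0
  | g :: l, h => by
      rintro x hx
      obtain ⟨a, ha, b, hb, rfl⟩ := Set.mem_add.mp hx
      exact hadd a (h g (List.mem_cons_self) ha) b
        (coneSum_subset hPi0 hadd l (fun g' hg' => h g' (List.mem_cons_of_mem _ hg')) hb)

lemma coneSum_mem_cover {Pi0 : Set V} (hPi0 : IsPolyhedralCone Pi0) :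
    ∀ l, ∀ g : LinearMap.GeneralLinearGroup ℝ V, g ∈ l →
      (g : V →ₗ[ℝ] V) '' Pi0 ⊆ coneSum Pi0 l := by
  intro l
  induction l with
  | nil => intro g hg; exact absurd hg List.not_mem_nil
  | cons g' l ih =>
      intro g hg x hx
      rcases List.mem_cons.mp hg with rfl | hg
      · exact Set.mem_add.mpr ⟨x, hx, 0, poly_zero_mem (coneSum_poly hPi0 l), add_zero x⟩
      · refine Set.mem_add.mpr ⟨0, ⟨0, poly_zero_mem hPi0, map_zero _⟩, x, ih g hg hx, zero_add x⟩
end GLpart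

lemma coset_reps {G : Type*} [Group G] (Γ' Γ : Subgroup G) (hle : Γ' ≤ Γ)
    (hidx : Γ'.relIndex Γ ≠ 0) :
    ∃ l : List G, (∀ r ∈ l, r ∈ Γ) ∧
      ∀ γ ∈ Γ, ∃ δ ∈ Γ', ∃ r ∈ l, γ = δ * r := by
  classical
  set H := Γ'.subgroupOf Γ with hH
  have hfin : Finite (Γ ⧸ H) := by
    rw [Subgroup.relIndex] at hidx
    have := Subgroup.index_eq_card H ▸ hidx
    exact (Nat.card_ne_zero.mp this).2
  haveI := hfin
  haveI : Fintype (Γ ⧸ H) := Fintype.ofFinite _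
  set l : List G := (Finset.univ : Finset (Γ ⧸ H)).toList.map
    (fun c => (((Quotient.out c)⁻¹ : Γ) : G)) with hl
  refine ⟨l, ?_, ?_⟩
  · intro r hr
    rw [hl] at hr
    obtain ⟨c, _, rfl⟩ := List.mem_map.mp hr
    exact ((Quotient.out c)⁻¹ : Γ).2
  · intro γ hγ
    set γ' : Γ := ⟨γ, hγ⟩
    set c : Γ ⧸ H := QuotientGroup.mk (γ'⁻¹) with hc
    have houtc : QuotientGroup.mk (Quotient.out c) = c := QuotientGroup.out_eq' c
    have hmem : (Quotient.out c)⁻¹ * γ'⁻¹ ∈ H := by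
      rw [← QuotientGroup.eq]
      rw [houtc, hc]
    set h : Γ := (Quotient.out c)⁻¹ * γ'⁻¹ with hh
    have hδ : (((h⁻¹ : Γ) : G)) ∈ Γ' := by
      have : h ∈ H := hmem
      rw [hH, Subgroup.mem_subgroupOf] at this
      exact (Subgroup.inv_mem_iff Γ').mpr this
    refine ⟨((h⁻¹ : Γ) : G), hδ, ((Quotient.out c)⁻¹ : Γ), ?_, ?_⟩
    · rw [hl]
      exact List.mem_map.mpr ⟨c, by simp, rfl⟩
    · have : γ' = h⁻¹ * (Quotient.out c)⁻¹ := by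
        rw [hh]
        group
      calc γ = ((γ' : Γ) : G) := rfl
        _ = (((h⁻¹ * (Quotient.out c)⁻¹ : Γ)) : G) := by rw [← this]
        _ = ((h⁻¹ : Γ) : G) * (((Quotient.out c)⁻¹ : Γ) : G) := rfl

end Aux

/-- Let `Γ, Γ'` be subgroups of `GL(V)` preserving the open
nondegenerate convex cone `C` and each preserving some lattice in `V(ℚ)`. If
`Γ ≤ Γ'` with finite index and `(C_+, Γ)` is of polyhedral type, then so is
`(C_+, Γ')`; and if `Γ' ≤ Γ` with finite index and `(C_+, Γ)` is of polyhedral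
type, then so is `(C_+, Γ')`. -/
theorem stmt_14 {V : Type*} [NormedAddCommGroup V] [NormedSpace ℝ V]
    [FiniteDimensional ℝ V]
    (C : Set V) (hCopen : IsOpen C) (hCconv : Convex ℝ C) (hCne : C.Nonempty)
    (hCcone : ∀ x ∈ C, ∀ t : ℝ, 0 < t → t • x ∈ C)
    (hCnd : ∀ x v : V, v ≠ 0 → ¬ ∀ t : ℝ, x + t • v ∈ C)
    (L₀ : AddSubgroup V) (hL₀disc : DiscreteTopology L₀)
    (hL₀span : Submodule.span ℝ (L₀ : Set V) = ⊤)
    (Q : Set V) (hQ : Q = {v : V | ∃ (q : ℚ) (l : V), l ∈ L₀ ∧ v = (q : ℝ) • l})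
    (Cp : Set V) (hCp : Cp = convexHull ℝ (closure C ∩ Q))
    (Γ Γ' : Subgroup (LinearMap.GeneralLinearGroup ℝ V))
    (hΓC : ∀ γ ∈ Γ, (γ : V →ₗ[ℝ] V) '' C = C)
    (hΓ'C : ∀ γ ∈ Γ', (γ : V →ₗ[ℝ] V) '' C = C)
    (hΓlat : ∃ L : AddSubgroup V, DiscreteTopology L ∧
      Submodule.span ℝ (L : Set V) = ⊤ ∧ (L : Set V) ⊆ Q ∧
      ∀ γ ∈ Γ, (γ : V →ₗ[ℝ] V) '' (L : Set V) = (L : Set V))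
    (hΓ'lat : ∃ L : AddSubgroup V, DiscreteTopology L ∧
      Submodule.span ℝ (L : Set V) = ⊤ ∧ (L : Set V) ⊆ Q ∧
      ∀ γ ∈ Γ', (γ : V →ₗ[ℝ] V) '' (L : Set V) = (L : Set V)) :
    ((Γ ≤ Γ' ∧ Γ.relIndex Γ' ≠ 0) → PolyhedralType Γ Cp → PolyhedralType Γ' Cp) ∧
      ((Γ' ≤ Γ ∧ Γ'.relIndex Γ ≠ 0) → PolyhedralType Γ Cp → PolyhedralType Γ' Cp) := by
  classical
  obtain ⟨L', hL'disc, hL'span, hL'Q, hL'inv⟩ := hΓ'lat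
  -- `Cp` is invariant under every element of `Γ'`
  have hCpinv : ∀ δ ∈ Γ', (δ : V →ₗ[ℝ] V) '' Cp = Cp := fun δ hδ =>
    cp_inv C L₀ hL₀disc hL₀span Q hQ Cp hCp δ (hΓ'C δ hδ) L' hL'disc hL'span hL'Q (hL'inv δ hδ)
  -- `closure C ∩ Q` is closed under addition
  have h2smul : ∀ z ∈ closure C, (2 : ℝ) • z ∈ closure C := by
    intro z hz
    have hmaps : (fun w : V => (2 : ℝ) • w) '' C ⊆ C := by
      rintro _ ⟨w, hw, rfl⟩; exact hCcone w hw 2 two_pos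
    have hcont : Continuous (fun w : V => (2 : ℝ) • w) := continuous_const_smul _
    have himg := image_closure_subset_closure_image (s := C) hcont
    exact closure_mono hmaps (himg ⟨z, hz, rfl⟩)
  have hclconv : Convex ℝ (closure C) := hCconv.closure
  have hcladd : ∀ x ∈ closure C, ∀ y ∈ closure C, x + y ∈ closure C := by
    intro x hx y hy
    have hmid : (1 / 2 : ℝ) • x + (1 / 2 : ℝ) • y ∈ closure C :=
      hclconv hx hy (by norm_num) (by norm_num) (by norm_num)
    have := h2smul _ hmid
    rw [smul_add, smul_smul, smul_smul] at this
    norm_num at this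
    exact this
  have hSadd : ∀ x ∈ closure C ∩ Q, ∀ y ∈ closure C ∩ Q, x + y ∈ closure C ∩ Q := by
    rintro x ⟨hx1, hx2⟩ y ⟨hy1, hy2⟩
    exact ⟨hcladd x hx1 y hy1, q_add_mem L₀ Q hQ x hx2 y hy2⟩
  have hCpadd : ∀ x ∈ Cp, ∀ y ∈ Cp, x + y ∈ Cp := by
    intro x hx y hy
    have hsub : Cp + Cp ⊆ Cp := by
      rw [hCp, ← convexHull_add]
      exact convexHull_mono (Set.add_subset_iff.mpr hSadd)
    exact hsub (Set.add_mem_add hx hy)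
  constructor
  · -- Γ ≤ Γ'
    rintro ⟨hle, -⟩ ⟨Pi0, hpoly, hsub, hcover⟩
    refine ⟨Pi0, hpoly, hsub, ?_⟩
    apply Set.Subset.antisymm
    · intro x hx
      simp only [Set.mem_iUnion] at hx
      obtain ⟨δ, hδ, hxδ⟩ := hx
      exact hCpinv δ hδ ▸ Set.image_mono hsub hxδ
    · rw [← hcover]
      exact Set.biUnion_subset_biUnion_left (fun g hg => hle hg)
  · -- Γ' ≤ Γ
    rintro ⟨hle, hidx⟩ ⟨Pi0, hpoly, hsub, hcover⟩
    obtain ⟨l, hlΓ, hdecomp⟩ := coset_reps Γ' Γ hle hidx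
    have hPi'sub : coneSum Pi0 l ⊆ Cp := by
      apply coneSum_subset hsub hCpadd l
      intro g hg
      have : (g : V →ₗ[ℝ] V) '' Pi0 ⊆ ⋃ γ ∈ Γ, (γ : V →ₗ[ℝ] V) '' Pi0 :=
        Set.subset_biUnion_of_mem (u := fun γ : LinearMap.GeneralLinearGroup ℝ V =>
          (γ : V →ₗ[ℝ] V) '' Pi0) (hlΓ g hg)
      rwa [hcover] at this
    refine ⟨coneSum Pi0 l, coneSum_poly hpoly l, hPi'sub, ?_⟩
    apply Set.Subset.antisymm
    · intro x hx
      simp only [Set.mem_iUnion] at hx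
      obtain ⟨δ, hδ, hxδ⟩ := hx
      exact hCpinv δ hδ ▸ Set.image_mono hPi'sub hxδ
    · intro x hx
      rw [← hcover] at hx
      simp only [Set.mem_iUnion] at hx
      obtain ⟨γ, hγ, p, hp, rfl⟩ := hx
      obtain ⟨δ, hδ, r, hr, rfl⟩ := hdecomp γ hγ
      refine Set.mem_iUnion₂.mpr ⟨δ, hδ, ?_⟩
      have hcomp : ((δ * r : LinearMap.GeneralLinearGroup ℝ V) : V →ₗ[ℝ] V) p
          = (δ : V →ₗ[ℝ] V) ((r : V →ₗ[ℝ] V) p) := rfl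
      rw [hcomp]
      exact ⟨_, coneSum_mem_cover hpoly l r hr ⟨p, hp, rfl⟩, rfl⟩
end
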